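/- Let B : 𝔻 → B(D,E) be an operator-valued Schur function (analytic with ‖B(z)‖ ≤ 1) with B(0) = 0, and 0 < c < 1. Then the kernel (1 − c z w̄)(I − B(z)B(w)*)/(1 − z w̄) is positive definite if and only if the kernel (I − B(z)B(w)*)/(1 − z w̄) − (c/(1−c)) B(z)B(w)* is positive definite. -/

import Mathlib

open ContinuousLinearMap
open scoped ComplexOrder

/-- A `B(E)`-valued kernel on the unit disc is positive definite. -/
def PosDefKer {E : Type*} [NormedAddCommGroup E] [InnerProductSpace ℂ E]
    (K : ℂ → ℂ → E →L[ℂ] E) : Prop :=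
  ∀ (n : ℕ) (z : Fin n → ℂ), (∀ i, z i ∈ Metric.ball (0 : ℂ) 1) →
    ∀ x : Fin n → E, 0 ≤ ∑ i, ∑ j, (inner ℂ (x j) (K (z i) (z j) (x i)) : ℂ)

lemma double_inner_sum {E : Type*} [NormedAddCommGroup E] [InnerProductSpace ℂ E]
    (n : ℕ) (x : Fin n → E) :
    ∑ i, ∑ j, (inner ℂ (x j) (x i) : ℂ) = inner ℂ (∑ i, x i) (∑ i, x i) := by
  rw [inner_sum]
  exact Finset.sum_congr rfl fun i _ => (sum_inner _ _ _).symm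

lemma inner_self_nonneg'' {E : Type*} [NormedAddCommGroup E] [InnerProductSpace ℂ E] (v : E) :
    (0:ℂ) ≤ inner ℂ v v := by
  rw [inner_self_eq_norm_sq_to_K]; norm_cast; positivity

/-- If `K(z,0) = K(0,w) = 1`, then `K` is a positive definite kernel iff `K - 1` is. -/
lemma posdefker_sub_one {E : Type*} [NormedAddCommGroup E] [InnerProductSpace ℂ E]
    (K : ℂ → ℂ → E →L[ℂ] E) (hz0 : ∀ z, K z 0 = 1) (h0w : ∀ w, K 0 w = 1) :
    PosDefKer K ↔ PosDefKer (fun z w => K z w - 1) := by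
  constructor
  · intro h n z hz x
    have h' := h (n+1) (Fin.cons 0 z) (by
      intro i
      refine Fin.cases ?_ ?_ i
      · simp
      · intro j; simpa using hz j) (Fin.cons (-∑ i, x i) x)
    simp only [Fin.sum_univ_succ, Fin.cons_zero, Fin.cons_succ, hz0, h0w,
      ContinuousLinearMap.one_apply] at h'
    simp only [ContinuousLinearMap.sub_apply, ContinuousLinearMap.one_apply,
      inner_sub_right, Finset.sum_sub_distrib]
    have e1 : ∑ i, ∑ j, (inner ℂ (x j) (x i) : ℂ) = inner ℂ (∑ i, x i) (∑ i, x i) :=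
      double_inner_sum n x
    have e2 : ∑ j, (inner ℂ (x j) (-∑ i, x i) : ℂ) = - inner ℂ (∑ i, x i) (∑ i, x i) := by
      rw [← sum_inner, inner_neg_right]
    have e3 : ∑ i, (inner ℂ (-∑ j, x j) (x i) : ℂ) = - inner ℂ (∑ i, x i) (∑ i, x i) := by
      rw [← inner_sum, inner_neg_left]
    convert h' using 1
    rw [e1]
    simp only [inner_neg_neg, Finset.sum_add_distrib, e2, e3]
    ring
  · intro h n z hz x
    have h' := h n z hz x
    simp only [ContinuousLinearMap.sub_apply, ContinuousLinearMap.one_apply,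
      inner_sub_right, Finset.sum_sub_distrib] at h'
    have := add_nonneg h' (inner_self_nonneg'' (∑ i, x i))
    rwa [← double_inner_sum, sub_add_cancel] at this

/-- Positive definiteness transfers along nonnegative scalar multiples (on the ball). -/
lemma posdef_congr_smul {E : Type*} [NormedAddCommGroup E] [InnerProductSpace ℂ E]
    (K K' : ℂ → ℂ → E →L[ℂ] E) (a : ℂ) (ha : 0 ≤ a)
    (hKK' : ∀ z ∈ Metric.ball (0:ℂ) 1, ∀ w ∈ Metric.ball (0:ℂ) 1,
      K' z w = a • K z w) (h : PosDefKer K) : PosDefKer K' := by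
  intro n z hz x
  have h' := h n z hz x
  calc (0:ℂ) ≤ a * ∑ i, ∑ j, (inner ℂ (x j) (K (z i) (z j) (x i)) : ℂ) :=
        mul_nonneg ha h'
    _ = _ := by
        rw [Finset.mul_sum]
        refine Finset.sum_congr rfl fun i _ => ?_
        rw [Finset.mul_sum]
        refine Finset.sum_congr rfl fun j _ => ?_
        rw [hKK' (z i) (hz i) (z j) (hz j)]
        simp [inner_smul_right]

theorem stmt17 {D E : Type*} [NormedAddCommGroup D] [InnerProductSpace ℂ D] [CompleteSpace D]
    [NormedAddCommGroup E] [InnerProductSpace ℂ E] [CompleteSpace E]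
    (B : ℂ → D →L[ℂ] E) (hB : DifferentiableOn ℂ B (Metric.ball 0 1))
    (hB1 : ∀ z ∈ Metric.ball (0 : ℂ) 1, ‖B z‖ ≤ 1) (hB0 : B 0 = 0)
    (c : ℝ) (hc0 : 0 < c) (hc1 : c < 1) :
    PosDefKer (fun z w => ((1 - (c : ℂ) * (z * (starRingEnd ℂ w))) / (1 - z * (starRingEnd ℂ w))) •
        ((1 : E →L[ℂ] E) - B z ∘L adjoint (B w))) ↔
      PosDefKer (fun z w => ((1 : ℂ) / (1 - z * (starRingEnd ℂ w))) •
          ((1 : E →L[ℂ] E) - B z ∘L adjoint (B w)) -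
        (((c / (1 - c) : ℝ)) : ℂ) • (B z ∘L adjoint (B w))) := by
  have hcpos : (0:ℝ) < 1 - c := by linarith
  have hcne : (1:ℂ) - (c:ℂ) ≠ 0 := by
    have : ((1 - c : ℝ) : ℂ) ≠ 0 := by exact_mod_cast hcpos.ne'
    push_cast at this
    exact this
  -- the fundamental pointwise identity on the ball
  have hid : ∀ z ∈ Metric.ball (0:ℂ) 1, ∀ w ∈ Metric.ball (0:ℂ) 1,
      (((1 : ℂ) / (1 - z * (starRingEnd ℂ w))) •
          ((1 : E →L[ℂ] E) - B z ∘L adjoint (B w)) -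
        (((c / (1 - c) : ℝ)) : ℂ) • (B z ∘L adjoint (B w))) - 1 =
      ((1 - (c:ℂ))⁻¹) •
        ((((1 - (c : ℂ) * (z * (starRingEnd ℂ w))) / (1 - z * (starRingEnd ℂ w))) •
          ((1 : E →L[ℂ] E) - B z ∘L adjoint (B w))) - 1) := by
    intro z hz w hw
    have hs : ‖z * (starRingEnd ℂ w)‖ < 1 := by
      rw [norm_mul, Complex.norm_conj]
      simp only [Metric.mem_ball, dist_zero_right] at hz hw
      exact lt_of_le_of_lt (mul_le_of_le_one_right (norm_nonneg _) hw.le) hz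
    have h1 : (1 : ℂ) - z * (starRingEnd ℂ w) ≠ 0 := by
      intro h
      rw [sub_eq_zero] at h
      rw [← h] at hs
      simp at hs
    push_cast
    match_scalars
    · field_simp
      ring
    · field_simp
      ring
  have h1a : ∀ z : ℂ, ((1 - (c : ℂ) * (z * (starRingEnd ℂ 0))) / (1 - z * (starRingEnd ℂ 0))) •
      ((1 : E →L[ℂ] E) - B z ∘L adjoint (B 0)) = 1 := by
    intro z; simp [hB0]
  have h1b : ∀ w : ℂ, ((1 - (c : ℂ) * ((0:ℂ) * (starRingEnd ℂ w))) / (1 - (0:ℂ) * (starRingEnd ℂ w))) •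
      ((1 : E →L[ℂ] E) - B 0 ∘L adjoint (B w)) = 1 := by
    intro w; simp [hB0]
  have h2a : ∀ z : ℂ, (((1 : ℂ) / (1 - z * (starRingEnd ℂ 0))) •
      ((1 : E →L[ℂ] E) - B z ∘L adjoint (B 0)) -
      (((c / (1 - c) : ℝ)) : ℂ) • (B z ∘L adjoint (B 0))) = 1 := by
    intro z; simp [hB0]
  have h2b : ∀ w : ℂ, (((1 : ℂ) / (1 - (0:ℂ) * (starRingEnd ℂ w))) •
      ((1 : E →L[ℂ] E) - B 0 ∘L adjoint (B w)) -
      (((c / (1 - c) : ℝ)) : ℂ) • (B 0 ∘L adjoint (B w))) = 1 := by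
    intro w; simp [hB0]
  rw [posdefker_sub_one (fun z w => ((1 - (c : ℂ) * (z * (starRingEnd ℂ w))) / (1 - z * (starRingEnd ℂ w))) •
        ((1 : E →L[ℂ] E) - B z ∘L adjoint (B w))) h1a h1b,
    posdefker_sub_one (fun z w => ((1 : ℂ) / (1 - z * (starRingEnd ℂ w))) •
          ((1 : E →L[ℂ] E) - B z ∘L adjoint (B w)) -
        (((c / (1 - c) : ℝ)) : ℂ) • (B z ∘L adjoint (B w))) h2a h2b]
  constructor
  · intro h
    refine posdef_congr_smul _ _ ((1 - (c:ℂ))⁻¹) ?_ (fun z hz w hw => hid z hz w hw) h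
    have : (0:ℂ) ≤ (((1 - c)⁻¹ : ℝ) : ℂ) := Complex.zero_le_real.mpr (by positivity)
    convert this using 1
    push_cast
    ring
  · intro h
    refine posdef_congr_smul _ _ (1 - (c:ℂ)) ?_ (fun z hz w hw => ?_) h
    · have : (0:ℂ) ≤ (((1 - c) : ℝ) : ℂ) := Complex.zero_le_real.mpr hcpos.le
      convert this using 1
      push_cast
      ring
    · rw [hid z hz w hw, smul_smul, mul_inv_cancel₀ hcne, one_smul]
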